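/- Let h > 0, k > 0 with 0 < kh < 2, and ω > 0. Then the ω-Jacobi smoothing factor of the standard 5-point Helmholtz operator at θ = (0,0) satisfies S̃_h(0,0) = 1 − ω + 4ω/(4 − k²h²) = 1 + ω k²h²/(4 − k²h²) > 1; in particular the ω-Jacobi smoother is divergent for the Helmholtz equation. -/
import Mathlib

/-- ω-Jacobi smoothing factor of the standard 5-point Helmholtz operator. -/
noncomputable def jacobiSmoothingFactor (h k ω θ₁ θ₂ : ℝ) : ℝ :=
  1 - ω + 2 * ω / (4 - k ^ 2 * h ^ 2) * (Real.cos θ₁ + Real.cos θ₂)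

/-- the ω-Jacobi smoothing factor at `θ = (0,0)` equals
`1 − ω + 4ω/(4 − k²h²) = 1 + ωk²h²/(4 − k²h²)` and is `> 1`; hence the
ω-Jacobi smoother is divergent for the Helmholtz equation. -/
theorem stmt14 (h k ω : ℝ) (hh : 0 < h) (hk : 0 < k) (hkh : k * h < 2)
    (hω : 0 < ω) :
    jacobiSmoothingFactor h k ω 0 0 = 1 - ω + 4 * ω / (4 - k ^ 2 * h ^ 2) ∧
    jacobiSmoothingFactor h k ω 0 0 = 1 + ω * k ^ 2 * h ^ 2 / (4 - k ^ 2 * h ^ 2) ∧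
    1 < jacobiSmoothingFactor h k ω 0 0 := by
  have hkh2 : k ^ 2 * h ^ 2 < 4 := by nlinarith [mul_pos hk hh, sq_nonneg (k*h)]
  have hpos : 0 < 4 - k ^ 2 * h ^ 2 := by linarith
  have hne : (4 - k ^ 2 * h ^ 2) ≠ 0 := ne_of_gt hpos
  unfold jacobiSmoothingFactor
  simp only [Real.cos_zero]
  refine ⟨by ring, by field_simp; ring, ?_⟩
  have h2 : 0 < ω * k ^ 2 * h ^ 2 / (4 - k ^ 2 * h ^ 2) := by positivity
  have : 1 - ω + 2 * ω / (4 - k ^ 2 * h ^ 2) * (1 + 1)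
      = 1 + ω * k ^ 2 * h ^ 2 / (4 - k ^ 2 * h ^ 2) := by field_simp; ring
  linarith
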